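/- Let f : ℝ^n → ℝ be differentiable with L-Lipschitz continuous gradient and strongly convex with modulus μ > 0 (so f(x+s) ≥ f(x) + ⟨∇f(x), s⟩ + (μ/2)‖s‖² for all x, s), with L ≥ μ, and let x* be the global minimizer of f. Let (x^k) be generated by x^{k+1} = x^k − (1/L)∇f(x^k). Then for every positive integer T, f(x^T) − f(x*) ≤ (1 − μ/L)^T (f(x⁰) − f(x*)). -/

import Mathlib

open RealInnerProductSpace

private lemma descent_lemma {n : ℕ} (f : EuclideanSpace ℝ (Fin n) → ℝ)
    (f' : EuclideanSpace ℝ (Fin n) → EuclideanSpace ℝ (Fin n))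
    (L : ℝ) (hL : 0 < L)
    (hdiff : ∀ x, HasGradientAt f (f' x) x)
    (hlip : ∀ x y, ‖f' x - f' y‖ ≤ L * ‖x - y‖)
    (x v : EuclideanSpace ℝ (Fin n)) :
    f (x + v) ≤ f x + ⟪f' x, v⟫ + L / 2 * ‖v‖ ^ 2 := by
  have hgc : Continuous f' := by
    have : LipschitzWith L.toNNReal f' := by
      apply LipschitzWith.of_dist_le_mul
      intro a b
      simpa [dist_eq_norm, Real.coe_toNNReal L hL.le] using hlip a b
    exact this.continuous
  set φ : ℝ → ℝ := fun t => f (x + t • v) with hφ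
  have hline : ∀ t : ℝ, HasDerivAt (fun t : ℝ => x + t • v) v t := by
    intro t
    simpa using ((hasDerivAt_id t).smul_const v).const_add x
  have hφ' : ∀ t : ℝ, HasDerivAt φ ⟪f' (x + t • v), v⟫ t := by
    intro t
    have h1 := (hdiff (x + t • v)).hasFDerivAt.comp_hasDerivAt t (hline t)
    exact h1
  have hcont : Continuous fun t : ℝ => ⟪f' (x + t • v), v⟫ := by
    exact (hgc.comp (by continuity)).inner continuous_const
  have hint : ∫ t in (0:ℝ)..1, ⟪f' (x + t • v), v⟫ = φ 1 - φ 0 := by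
    exact intervalIntegral.integral_eq_sub_of_hasDerivAt
      (fun t _ => hφ' t) (hcont.intervalIntegrable 0 1)
  have hbound : ∫ t in (0:ℝ)..1, ⟪f' (x + t • v), v⟫
      ≤ ∫ t in (0:ℝ)..1, (⟪f' x, v⟫ + L * t * ‖v‖ ^ 2) := by
    apply intervalIntegral.integral_mono_on (by norm_num)
      (hcont.intervalIntegrable 0 1)
      ((by continuity : Continuous fun t : ℝ => ⟪f' x, v⟫ + L * t * ‖v‖ ^ 2).intervalIntegrable 0 1)
    intro t ht
    rcases ht with ⟨ht0, ht1⟩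
    have h1 : ⟪f' (x + t • v), v⟫ - ⟪f' x, v⟫ = ⟪f' (x + t • v) - f' x, v⟫ := by
      rw [inner_sub_left]
    have h2 : ⟪f' (x + t • v) - f' x, v⟫ ≤ ‖f' (x + t • v) - f' x‖ * ‖v‖ :=
      real_inner_le_norm _ _
    have h3 : ‖f' (x + t • v) - f' x‖ ≤ L * ‖t • v‖ := by
      simpa using hlip (x + t • v) x
    have h4 : ‖t • v‖ = t * ‖v‖ := by
      rw [norm_smul, Real.norm_eq_abs, abs_of_nonneg ht0]
    rw [h4] at h3
    have h5 := mul_le_mul_of_nonneg_right h3 (norm_nonneg v)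
    have h6 : L * (t * ‖v‖) * ‖v‖ = L * t * ‖v‖ ^ 2 := by ring
    linarith
  have hrhs : ∫ t in (0:ℝ)..1, (⟪f' x, v⟫ + L * t * ‖v‖ ^ 2)
      = ⟪f' x, v⟫ + L / 2 * ‖v‖ ^ 2 := by
    have : ∀ t : ℝ, ⟪f' x, v⟫ + L * t * ‖v‖ ^ 2 = ⟪f' x, v⟫ + (L * ‖v‖ ^ 2) * t := by
      intro t; ring
    simp only [this]
    rw [intervalIntegral.integral_add (intervalIntegrable_const)
      ((intervalIntegral.intervalIntegrable_id).const_mul _),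
      intervalIntegral.integral_const_mul, integral_id]
    simp; ring
  have : φ 1 - φ 0 ≤ ⟪f' x, v⟫ + L / 2 * ‖v‖ ^ 2 := by
    rw [← hint, ← hrhs]; exact hbound
  simp only [hφ, one_smul, zero_smul, add_zero] at this
  linarith

theorem gradient_descent_strongly_convex_rate
    (n : ℕ) (f : EuclideanSpace ℝ (Fin n) → ℝ)
    (f' : EuclideanSpace ℝ (Fin n) → EuclideanSpace ℝ (Fin n))
    (L μ : ℝ) (hμ : 0 < μ) (hLμ : μ ≤ L)
    (hdiff : ∀ x, HasGradientAt f (f' x) x)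
    (hlip : ∀ x y, ‖f' x - f' y‖ ≤ L * ‖x - y‖)
    (hstrong : ∀ x s, f x + ⟪f' x, s⟫ + μ / 2 * ‖s‖ ^ 2 ≤ f (x + s))
    (xstar : EuclideanSpace ℝ (Fin n)) (hmin : ∀ x, f xstar ≤ f x)
    (x : ℕ → EuclideanSpace ℝ (Fin n))
    (hiter : ∀ k, x (k + 1) = x k - (1 / L) • f' (x k))
    (T : ℕ) (hT : 0 < T) :
    f (x T) - f xstar ≤ (1 - μ / L) ^ T * (f (x 0) - f xstar) := by
  have hL : 0 < L := lt_of_lt_of_le hμ hLμ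
  -- per-step contraction
  have key : ∀ k, f (x (k + 1)) - f xstar ≤ (1 - μ / L) * (f (x k) - f xstar) := by
    intro k
    set g := f' (x k) with hg
    -- descent step
    have hstep : f (x (k + 1)) ≤ f (x k) - ‖g‖ ^ 2 / (2 * L) := by
      have h1 := descent_lemma f f' L hL hdiff hlip (x k) (-((1 / L) • g))
      have hx : x k + -((1 / L) • g) = x (k + 1) := by rw [hiter k]; abel
      rw [hx] at h1
      have hinner : ⟪g, -((1 / L) • g)⟫ = -(1 / L) * ‖g‖ ^ 2 := by
        rw [inner_neg_right, real_inner_smul_right, real_inner_self_eq_norm_sq]; ring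
      have hn : ‖-((1 / L) • g)‖ ^ 2 = (1 / L) ^ 2 * ‖g‖ ^ 2 := by
        rw [norm_neg, norm_smul, mul_pow, Real.norm_eq_abs, sq_abs]
      rw [hinner, hn] at h1
      have : f (x (k+1)) ≤ f (x k) - (1/L) * ‖g‖^2 + L/2 * ((1/L)^2 * ‖g‖^2) := by linarith
      have heq : f (x k) - (1/L) * ‖g‖^2 + L/2 * ((1/L)^2 * ‖g‖^2)
          = f (x k) - ‖g‖ ^ 2 / (2 * L) := by field_simp; ring
      linarith [heq ▸ this]
    -- PL inequality
    have hPL : 2 * μ * (f (x k) - f xstar) ≤ ‖g‖ ^ 2 := by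
      have h1 := hstrong (x k) (xstar - x k)
      rw [add_sub_cancel, ← hg] at h1
      have h2 : ⟪g, xstar - x k⟫ ≥ -(‖g‖ * ‖xstar - x k‖) := by
        have := abs_real_inner_le_norm g (xstar - x k)
        have := neg_abs_le ⟪g, xstar - x k⟫
        linarith
      nlinarith [sq_nonneg (‖g‖ - μ * ‖xstar - x k‖), hμ.le, h1, h2]
    have h3 : μ / L * (f (x k) - f xstar) ≤ ‖g‖ ^ 2 / (2 * L) := by
      rw [div_mul_eq_mul_div, div_le_div_iff₀ hL (by positivity)]
      nlinarith [hPL, hL.le]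
    have heq2 : (1 - μ / L) * (f (x k) - f xstar)
        = (f (x k) - f xstar) - μ / L * (f (x k) - f xstar) := by ring
    linarith [hstep, h3]
  -- induction
  have hr0 : (0:ℝ) ≤ 1 - μ / L := by
    have : μ / L ≤ 1 := (div_le_one hL).mpr hLμ
    linarith
  clear hT
  induction T with
  | zero => simp
  | succ k ih =>
    calc f (x (k + 1)) - f xstar ≤ (1 - μ / L) * (f (x k) - f xstar) := key k
      _ ≤ (1 - μ / L) * ((1 - μ / L) ^ k * (f (x 0) - f xstar)) :=
          mul_le_mul_of_nonneg_left ih hr0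
      _ = (1 - μ / L) ^ (k + 1) * (f (x 0) - f xstar) := by ring
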